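/- Let B be a standard one-dimensional Brownian motion. Then for all 0 ≤ u < s < r and all δ, δ' > 0, E[p_δ(B_r − B_s) · p_{δ'}(B_r − B_u)] = (2π)^{−1} [(δ + r − s)(δ' + s − u) + δ(r − s)]^{−1/2}. -/

import Mathlib

open MeasureTheory ProbabilityTheory Filter Real Set

/-- `B` is a standard one-dimensional Brownian motion (indexed by nonnegative times)
under the probability measure `P`. -/
def IsStdBrownianMotion {Ω : Type*} [MeasurableSpace Ω] (P : Measure Ω)
    (B : ℝ → Ω → ℝ) : Prop :=
  (∀ ω, Continuous fun t => B t ω) ∧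
  (∀ ω, B 0 ω = 0) ∧
  (∀ t, Measurable (B t)) ∧
  (∀ (n : ℕ) (t : ℕ → ℝ), 0 ≤ t 0 → (∀ i, t i ≤ t (i + 1)) →
    iIndepFun
      (fun i : Fin n => fun ω => B (t (i + 1)) ω - B (t i) ω) P) ∧
  (∀ s t : ℝ, 0 ≤ s → s ≤ t →
    Measure.map (fun ω => B t ω - B s ω) P = gaussianReal 0 (Real.toNNReal (t - s)))

/-- The Gaussian kernel `p_ε(x) = (2πε)^{-1/2} exp(-x²/(2ε))`. -/
noncomputable def gaussKer (ε : ℝ) (x : ℝ) : ℝ :=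
  (Real.sqrt (2 * Real.pi * ε))⁻¹ * Real.exp (-x ^ 2 / (2 * ε))


open scoped ENNReal NNReal

lemma gaussKer_nonneg (ε x : ℝ) : 0 ≤ gaussKer ε x := by
  unfold gaussKer; positivity

lemma gaussKer_le (ε x : ℝ) (hε : 0 < ε) : gaussKer ε x ≤ (Real.sqrt (2 * Real.pi * ε))⁻¹ := by
  unfold gaussKer
  have h1 : Real.exp (-x ^ 2 / (2 * ε)) ≤ 1 :=
    Real.exp_le_one_iff.2 (div_nonpos_of_nonpos_of_nonneg (neg_nonpos.2 (sq_nonneg x)) (by positivity))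
  calc (Real.sqrt (2 * Real.pi * ε))⁻¹ * Real.exp (-x ^ 2 / (2 * ε))
      ≤ (Real.sqrt (2 * Real.pi * ε))⁻¹ * 1 := by
        exact mul_le_mul_of_nonneg_left h1 (by positivity)
    _ = _ := mul_one _

lemma gaussKer_continuous (ε : ℝ) : Continuous (gaussKer ε) := by
  unfold gaussKer; fun_prop

lemma integral_gaussianReal' (v : ℝ) (hv : 0 < v) (f : ℝ → ℝ) :
    ∫ x, f x ∂(gaussianReal 0 v.toNNReal) = ∫ x, gaussKer v x * f x := by
  have hv' : v.toNNReal ≠ 0 := by simp [Real.toNNReal_eq_zero, not_le, hv]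
  rw [gaussianReal_of_var_ne_zero _ hv']
  have h1 : (gaussianPDF 0 v.toNNReal) =
      fun x => ((fun x => (gaussianPDFReal 0 v.toNNReal x).toNNReal) x : ℝ≥0∞) := by
    funext x; simp [gaussianPDF, ENNReal.ofReal]
  rw [h1, integral_withDensity_eq_integral_smul
    ((measurable_gaussianPDFReal 0 v.toNNReal).real_toNNReal)]
  congr 1; funext x
  rw [NNReal.smul_def, Real.coe_toNNReal _ (gaussianPDFReal_nonneg _ _ _)]
  have : gaussianPDFReal 0 v.toNNReal x = gaussKer v x := by
    simp [gaussianPDFReal, gaussKer, Real.coe_toNNReal _ hv.le]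
  rw [this, smul_eq_mul]


lemma gaussKer_conv (c d : ℝ) (hc : 0 < c) (hd : 0 < d) (z : ℝ) :
    ∫ y, gaussKer c (z + y) * gaussKer d y = gaussKer (c + d) z := by
  have hcd : 0 < c + d := by linarith
  have hπ := Real.pi_pos
  have hk : 0 < (c + d) / (2 * c * d) := by positivity
  have hexp : ∀ y : ℝ, -(z + y)^2/(2*c) + -y^2/(2*d) =
      -z^2/(2*(c+d)) + -((c + d) / (2 * c * d)) * (y + d * z / (c + d)) ^ 2 := by
    intro y; field_simp; ring
  have hstep : ∀ y : ℝ, gaussKer c (z + y) * gaussKer d y =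
      ((Real.sqrt (2*π*c))⁻¹ * (Real.sqrt (2*π*d))⁻¹ * Real.exp (-z^2/(2*(c+d)))) *
      Real.exp (-((c + d) / (2 * c * d)) * (y + d * z / (c + d)) ^ 2) := by
    intro y
    unfold gaussKer
    rw [mul_mul_mul_comm, ← Real.exp_add, hexp y, Real.exp_add]
    ring
  simp_rw [hstep]
  rw [integral_const_mul]
  have htr : ∫ y : ℝ, Real.exp (-((c + d) / (2 * c * d)) * (y + d * z / (c + d)) ^ 2)
      = ∫ y : ℝ, Real.exp (-((c + d) / (2 * c * d)) * y ^ 2) :=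
    integral_add_right_eq_self (fun y => Real.exp (-((c + d) / (2 * c * d)) * y ^ 2)) _
  rw [htr, integral_gaussian]
  have e1 : Real.sqrt ((2*π*c)⁻¹ * ((2*π*d)⁻¹ * (π / ((c + d) / (2 * c * d)))))
      = (Real.sqrt (2*π*c))⁻¹ * ((Real.sqrt (2*π*d))⁻¹ *
        Real.sqrt (π / ((c + d) / (2 * c * d)))) := by
    rw [Real.sqrt_mul (by positivity), Real.sqrt_mul (by positivity),
      Real.sqrt_inv, Real.sqrt_inv]
  have e3 : (2*π*c)⁻¹ * ((2*π*d)⁻¹ * (π / ((c + d) / (2 * c * d)))) = (2*π*(c+d))⁻¹ := by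
    field_simp
  have hsq : (Real.sqrt (2*π*c))⁻¹ * (Real.sqrt (2*π*d))⁻¹ *
      Real.sqrt (π / ((c + d) / (2 * c * d))) = (Real.sqrt (2*π*(c+d)))⁻¹ := by
    rw [mul_assoc, ← e1, e3, Real.sqrt_inv]
  unfold gaussKer
  rw [← hsq]
  ring

lemma gaussKer_prod3 (a c e : ℝ) (ha : 0 < a) (hc : 0 < c) (he : 0 < e) :
    ∫ x, gaussKer a x * (gaussKer c x * gaussKer e x) =
      (2 * Real.pi)⁻¹ * (c * e + c * a + e * a) ^ (-(1:ℝ)/2) := by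
  have hπ := Real.pi_pos
  have hK : 0 < c * e + c * a + e * a := by positivity
  have hS : 0 < (c * e + c * a + e * a) / (2 * a * c * e) := by positivity
  have hexp : ∀ x : ℝ, -x^2/(2*a) + (-x^2/(2*c) + -x^2/(2*e)) =
      -((c * e + c * a + e * a) / (2 * a * c * e)) * x ^ 2 := by
    intro x; field_simp; ring
  have hstep : ∀ x : ℝ, gaussKer a x * (gaussKer c x * gaussKer e x) =
      ((Real.sqrt (2*π*a))⁻¹ * (Real.sqrt (2*π*c))⁻¹ * (Real.sqrt (2*π*e))⁻¹) *
      Real.exp (-((c * e + c * a + e * a) / (2 * a * c * e)) * x ^ 2) := by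
    intro x
    unfold gaussKer
    rw [show ∀ A B C D E F : ℝ, (A*B) * ((C*D) * (E*F)) = (A*C*E) * (B*(D*F)) by
      intros; ring, ← Real.exp_add, ← Real.exp_add, hexp x]
  simp_rw [hstep]
  rw [integral_const_mul, integral_gaussian]
  have hrpow : (c * e + c * a + e * a) ^ (-(1:ℝ)/2) =
      (Real.sqrt (c * e + c * a + e * a))⁻¹ := by
    rw [neg_div, Real.rpow_neg hK.le, Real.sqrt_eq_rpow]
  rw [hrpow]
  have e1 : Real.sqrt ((2*π*a)⁻¹ * ((2*π*c)⁻¹ * ((2*π*e)⁻¹ *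
        (π / ((c * e + c * a + e * a) / (2 * a * c * e))))))
      = (Real.sqrt (2*π*a))⁻¹ * ((Real.sqrt (2*π*c))⁻¹ * ((Real.sqrt (2*π*e))⁻¹ *
        Real.sqrt (π / ((c * e + c * a + e * a) / (2 * a * c * e))))) := by
    rw [Real.sqrt_mul (by positivity), Real.sqrt_mul (by positivity),
      Real.sqrt_mul (by positivity), Real.sqrt_inv, Real.sqrt_inv, Real.sqrt_inv]
  have e2 : Real.sqrt (((2*π)⁻¹)^2 * (c * e + c * a + e * a)⁻¹)
      = (2*π)⁻¹ * (Real.sqrt (c * e + c * a + e * a))⁻¹ := by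
    rw [Real.sqrt_mul (by positivity), Real.sqrt_sq (by positivity), Real.sqrt_inv]
  have e3 : (2*π*a)⁻¹ * ((2*π*c)⁻¹ * ((2*π*e)⁻¹ *
        (π / ((c * e + c * a + e * a) / (2 * a * c * e)))))
      = ((2*π)⁻¹)^2 * (c * e + c * a + e * a)⁻¹ := by
    field_simp
  calc (Real.sqrt (2*π*a))⁻¹ * (Real.sqrt (2*π*c))⁻¹ * (Real.sqrt (2*π*e))⁻¹ *
        Real.sqrt (π / ((c * e + c * a + e * a) / (2 * a * c * e)))
      = (Real.sqrt (2*π*a))⁻¹ * ((Real.sqrt (2*π*c))⁻¹ * ((Real.sqrt (2*π*e))⁻¹ *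
        Real.sqrt (π / ((c * e + c * a + e * a) / (2 * a * c * e))))) := by ring
    _ = (2*π)⁻¹ * (Real.sqrt (c * e + c * a + e * a))⁻¹ := by rw [← e1, e3, e2]

theorem stmt13 {Ω : Type*} [MeasurableSpace Ω] (P : Measure Ω) [IsProbabilityMeasure P]
    (B : ℝ → Ω → ℝ) (hB : IsStdBrownianMotion P B)
    (u s r : ℝ) (hu : 0 ≤ u) (hus : u < s) (hsr : s < r)
    (δ δ' : ℝ) (hδ : 0 < δ) (hδ' : 0 < δ') :
    ∫ ω, gaussKer δ (B r ω - B s ω) * gaussKer δ' (B r ω - B u ω) ∂P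
      = (2 * Real.pi)⁻¹ *
        ((δ + (r - s)) * (δ' + (s - u)) + δ * (r - s)) ^ (-(1:ℝ)/2) := by
  obtain ⟨hcont, h0, hmeas, hindep, hlaw⟩ := hB
  have ha : (0:ℝ) < r - s := by linarith
  have hb : (0:ℝ) < s - u := by linarith
  set Y : Ω → ℝ := fun ω => B s ω - B u ω with hY
  set X : Ω → ℝ := fun ω => B r ω - B s ω with hX
  have hXm : Measurable X := (hmeas r).sub (hmeas s)
  have hYm : Measurable Y := (hmeas s).sub (hmeas u)
  -- independence of increments
  set t : ℕ → ℝ := fun n => if n = 0 then u else if n = 1 then s else r with ht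
  have hmono : ∀ i, t i ≤ t (i + 1) := by
    intro i
    match i with
    | 0 => simp [t]; linarith
    | 1 => simp [t]; linarith
    | (n+2) => simp [t]
  have hind2 := hindep 2 t (by simp [t, hu]) hmono
  have hYX : IndepFun Y X P := by
    have h := hind2.indepFun (i := 0) (j := 1) (by decide)
    simpa [t, Y, X] using h
  have hmap : P.map (fun ω => (Y ω, X ω)) =
      (gaussianReal 0 (s - u).toNNReal).prod (gaussianReal 0 (r - s).toNNReal) := by
    rw [(indepFun_iff_map_prod_eq_prod_map_map hYm.aemeasurable hXm.aemeasurable).1 hYX,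
      hlaw u s hu hus.le, hlaw s r (by linarith) hsr.le]
  set F : ℝ × ℝ → ℝ := fun p => gaussKer δ p.2 * gaussKer δ' (p.2 + p.1) with hF
  have hFcont : Continuous F :=
    ((gaussKer_continuous δ).comp continuous_snd).mul
      ((gaussKer_continuous δ').comp (continuous_snd.add continuous_fst))
  have hrw : ∀ ω, gaussKer δ (B r ω - B s ω) * gaussKer δ' (B r ω - B u ω)
      = F (Y ω, X ω) := by
    intro ω
    simp only [F, X, Y]
    rw [sub_add_sub_cancel]
  simp_rw [hrw]
  have hint : ∫ ω, F (Y ω, X ω) ∂P = ∫ p, F p ∂(P.map (fun ω => (Y ω, X ω))) := by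
    rw [integral_map (hYm.prodMk hXm).aemeasurable hFcont.aestronglyMeasurable]
  rw [hint, hmap]
  have hFi : Integrable F
      ((gaussianReal 0 (s - u).toNNReal).prod (gaussianReal 0 (r - s).toNNReal)) := by
    refine ⟨hFcont.aestronglyMeasurable, ?_⟩
    refine HasFiniteIntegral.of_bounded
      (C := (Real.sqrt (2 * Real.pi * δ))⁻¹ * (Real.sqrt (2 * Real.pi * δ'))⁻¹)
      (ae_of_all _ fun p => ?_)
    rw [Real.norm_eq_abs, abs_of_nonneg (mul_nonneg (gaussKer_nonneg _ _) (gaussKer_nonneg _ _))]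
    exact mul_le_mul (gaussKer_le _ _ hδ) (gaussKer_le _ _ hδ')
      (gaussKer_nonneg _ _) (by positivity)
  rw [integral_prod_symm F hFi]
  have hinner : ∀ x : ℝ, (∫ y, F (y, x) ∂(gaussianReal 0 (s - u).toNNReal))
      = gaussKer δ x * gaussKer (δ' + (s - u)) x := by
    intro x
    rw [integral_gaussianReal' (s - u) hb]
    have : ∀ y : ℝ, gaussKer (s - u) y * F (y, x)
        = gaussKer δ x * (gaussKer δ' (x + y) * gaussKer (s - u) y) := by
      intro y; simp only [F]; ring
    simp_rw [this]
    rw [integral_const_mul, gaussKer_conv δ' (s - u) hδ' hb x]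
  simp_rw [hinner]
  rw [integral_gaussianReal' (r - s) ha, gaussKer_prod3 (r - s) δ (δ' + (s - u)) ha hδ
    (by linarith)]
  congr 2
  ring
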